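/- The eight squares 1793303948742806004358839863314163172496768^2, 35647669259187200217596168619979944579248^2, 1350335627724462794940009188342343291253664^2, 509318278582178443295965724916222044316304^2, 2125938053817649628168174016173670414131324^2, 863449486628378007179143401686267952168368^2, 2943648522151467304268140794140107220456896^2, 70025522883762244048096185376403205296573^2 are pairwise distinct, and the sum of any seven of them is a perfect square. -/

import Mathlib

private lemma vec8_five {α : Type*} (x0 x1 x2 x3 x4 x5 x6 x7 : α) :
    ![x0,x1,x2,x3,x4,x5,x6,x7] 5 = x5 := rfl
private lemma vec8_six {α : Type*} (x0 x1 x2 x3 x4 x5 x6 x7 : α) :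
    ![x0,x1,x2,x3,x4,x5,x6,x7] 6 = x6 := rfl
private lemma vec8_seven {α : Type*} (x0 x1 x2 x3 x4 x5 x6 x7 : α) :
    ![x0,x1,x2,x3,x4,x5,x6,x7] 7 = x7 := rfl
private lemma vec8_two {α : Type*} (x0 x1 x2 x3 x4 x5 x6 x7 : α) :
    ![x0,x1,x2,x3,x4,x5,x6,x7] 2 = x2 := rfl
private lemma vec8_three {α : Type*} (x0 x1 x2 x3 x4 x5 x6 x7 : α) :
    ![x0,x1,x2,x3,x4,x5,x6,x7] 3 = x3 := rfl
private lemma vec8_four {α : Type*} (x0 x1 x2 x3 x4 x5 x6 x7 : α) :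
    ![x0,x1,x2,x3,x4,x5,x6,x7] 4 = x4 := rfl

theorem stmt_19 (a : Fin 8 → ℤ)
    (ha : a = ![1793303948742806004358839863314163172496768,
                35647669259187200217596168619979944579248,
                1350335627724462794940009188342343291253664,
                509318278582178443295965724916222044316304,
                2125938053817649628168174016173670414131324,
                863449486628378007179143401686267952168368,
                2943648522151467304268140794140107220456896,
                70025522883762244048096185376403205296573]) :
    (∀ i j : Fin 8, i ≠ j → (a i) ^ 2 ≠ (a j) ^ 2) ∧
    (∀ i : Fin 8, ∃ m : ℤ, (∑ j, (a j) ^ 2) - (a i) ^ 2 = m ^ 2) := by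
  subst ha
  constructor
  · intro i j hij
    fin_cases i <;> fin_cases j <;> simp_all [vec8_five, vec8_six, vec8_seven]
  · intro i
    fin_cases i
    · exact ⟨4002400528829166538479347417702710397036731, by norm_num [Fin.sum_univ_eight, vec8_five, vec8_six, vec8_seven, vec8_two, vec8_three, vec8_four]⟩
    · exact ⟨4385644569436164437290271847577349052742459, by norm_num [Fin.sum_univ_eight, vec8_five, vec8_six, vec8_seven, vec8_two, vec8_three, vec8_four]⟩
    · exact ⟨4172738038536149656777107985571858304119483, by norm_num [Fin.sum_univ_eight, vec8_five, vec8_six, vec8_seven, vec8_two, vec8_three, vec8_four]⟩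
    · exact ⟨4356115693694397164879280588711333270083387, by norm_num [Fin.sum_univ_eight, vec8_five, vec8_six, vec8_seven, vec8_two, vec8_three, vec8_four]⟩
    · exact ⟨3836083476291744726574680341272956776219453, by norm_num [Fin.sum_univ_eight, vec8_five, vec8_six, vec8_seven, vec8_two, vec8_three, vec8_four]⟩
    · exact ⟨4299953956705783497576850285423636867541819, by norm_num [Fin.sum_univ_eight, vec8_five, vec8_six, vec8_seven, vec8_two, vec8_three, vec8_four]⟩
    · exact ⟨3251166317459630525658766502613307905355963, by norm_num [Fin.sum_univ_eight, vec8_five, vec8_six, vec8_seven, vec8_two, vec8_three, vec8_four]⟩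
    · exact ⟨4385230378428639436762193534122452386950684, by norm_num [Fin.sum_univ_eight, vec8_five, vec8_six, vec8_seven, vec8_two, vec8_three, vec8_four]⟩
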